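/- arXiv:1812.04966 — 3 statements merged into one kernel-verified Lean document; each statement's English description precedes it below -/
import Mathlib

section
/- Fix ε ∈ (0, 1/5], a finite point set P ⊂ R^d, and α > 0 with α and (1+ε)α both of the form (1+ε)^k. With S_α defined as the union of pixels (from the lattice at scale α) whose center is within distance α of P, one has B_{(1+ε/2)α} ⊆ S_{(1+ε)α}, i.e., every point within distance (1+ε/2)α of P lies in some pixel of the grid used at scale (1+ε)α whose center is within distance (1+ε)α of P. -/
/-- The closed lattice cube (pixel) of the lattice `c·ℤ^d` with base point `m`. -/
def pixel (d : ℕ) (c : ℝ) (m : Fin d → ℤ) : Set (EuclideanSpace ℝ (Fin d)) :=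
  {x | ∀ i, c * m i ≤ x i ∧ x i ≤ c * (m i + 1)}

/-- The center of the pixel of `c·ℤ^d` with base point `m`. -/
noncomputable def pixelCenter (d : ℕ) (c : ℝ) (m : Fin d → ℤ) :
    EuclideanSpace ℝ (Fin d) :=
  WithLp.toLp 2 (fun i => c * (m i + 1 / 2))

/-- Every point within distance (1+ε/2)α of P lies in some pixel of the grid at
scale (1+ε)α (built on the lattice `(εβ/(4√d))·ℤ^d` where β is the largest power
of 2 with β ≤ (1+ε)α) whose center is within distance (1+ε)α of P. -/
theorem balls_subset_pixelization {d : ℕ} (hd : 0 < d) {ε α β : ℝ}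
    (hε0 : 0 < ε) (hε : ε ≤ 1 / 5) (hα : 0 < α)
    (kk : ℤ) (hform : α = (1 + ε) ^ kk)
    (k : ℤ) (hβ : β = 2 ^ k) (hβle : β ≤ (1 + ε) * α) (hlt : (1 + ε) * α < 2 * β)
    (P : Finset (EuclideanSpace ℝ (Fin d)))
    (x : EuclideanSpace ℝ (Fin d))
    (hx : ∃ p ∈ P, dist x p ≤ (1 + ε / 2) * α) :
    ∃ m : Fin d → ℤ, x ∈ pixel d (ε * β / (4 * Real.sqrt d)) m ∧
      ∃ p ∈ P,
        dist (pixelCenter d (ε * β / (4 * Real.sqrt d)) m) p ≤ (1 + ε) * α := by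
  obtain ⟨p, hp, hxp⟩ := hx
  have hd' : (0:ℝ) < d := Nat.cast_pos.mpr hd
  have hsd : 0 < Real.sqrt d := Real.sqrt_pos.mpr hd'
  have hβ0 : 0 < β := by rw [hβ]; positivity
  set c := ε * β / (4 * Real.sqrt d) with hc
  have hc0 : 0 < c := by positivity
  set m : Fin d → ℤ := fun i => ⌊x i / c⌋ with hm
  have hmem : ∀ i, c * m i ≤ x i ∧ x i ≤ c * (m i + 1) := by
    intro i
    constructor
    · have := Int.floor_le (x i / c)
      calc c * m i ≤ c * (x i / c) := by
            exact mul_le_mul_of_nonneg_left this hc0.le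
        _ = x i := by field_simp
    · have := (Int.lt_floor_add_one (x i / c)).le
      calc x i = c * (x i / c) := by field_simp
        _ ≤ c * (m i + 1) := mul_le_mul_of_nonneg_left this hc0.le
  refine ⟨m, hmem, p, hp, ?_⟩
  have hdist : dist (pixelCenter d c m) x ≤ Real.sqrt d * (c / 2) := by
    rw [EuclideanSpace.dist_eq]
    simp only [Real.dist_eq, sq_abs]
    have hbd : ∀ i ∈ Finset.univ, (pixelCenter d c m i - x i) ^ 2 ≤ (c / 2) ^ 2 := by
      intro i _
      obtain ⟨h1, h2⟩ := hmem i
      have : |pixelCenter d c m i - x i| ≤ c / 2 := by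
        rw [abs_le]
        simp only [pixelCenter, PiLp.toLp_apply]
        constructor <;> nlinarith
      calc (pixelCenter d c m i - x i) ^ 2 = |pixelCenter d c m i - x i| ^ 2 := (sq_abs _).symm
        _ ≤ (c / 2) ^ 2 := by
            exact pow_le_pow_left₀ (abs_nonneg _) this 2
    calc Real.sqrt (∑ i, (pixelCenter d c m i - x i) ^ 2)
        ≤ Real.sqrt (∑ _i : Fin d, (c / 2) ^ 2) :=
          Real.sqrt_le_sqrt (Finset.sum_le_sum hbd)
      _ = Real.sqrt ((d : ℝ) * (c / 2) ^ 2) := by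
          rw [Finset.sum_const, Finset.card_univ, Fintype.card_fin, nsmul_eq_mul]
      _ = Real.sqrt d * (c / 2) := by
          rw [Real.sqrt_mul hd'.le, Real.sqrt_sq (by positivity)]
  have hcval : Real.sqrt d * (c / 2) = ε * β / 8 := by
    rw [hc]; field_simp; ring
  have htri : dist (pixelCenter d c m) p ≤ dist (pixelCenter d c m) x + dist x p :=
    dist_triangle _ _ _
  rw [hcval] at hdist
  have h1 : ε * β ≤ ε * ((1 + ε) * α) := mul_le_mul_of_nonneg_left hβle hε0.le
  have h2 : ε * (ε * α) ≤ (1 / 5) * (ε * α) :=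
    mul_le_mul_of_nonneg_right hε (by positivity)
  nlinarith [hdist, hxp, htri, mul_pos hε0 hα]
end

section
/- Let P ⊂ R^d be a finite set, W a δ-WSPD of P with δ ≤ 1/10, and define for each p ∈ P the set R̃_p ⊆ [0, ∞) as the union of the intervals [d(A,B)/4, 4·d(A,B)] over all pairs (A,B) ∈ W with p ∈ A or p ∈ B, where d(A,B) is the distance between the chosen representatives. Let r̃_p(α) = max{ r ≤ α : r ∈ R̃_p } (with r̃_p(α) = 0 if no such r exists). Then for every α ≥ 0, the nerve of the collection {\bar{B}(p, r̃_p(α)) : p ∈ P} equals the Čech complex C_α, i.e., the nerve of {\bar{B}(p, α) : p ∈ P}. -/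
/-- Lazy radii from a δ-WSPD reproduce the Čech complex: with
r̃_p(α) = max{ r ≤ α : r ∈ R̃_p } (and 0 if no such r), where R̃_p is the union
of the intervals [d(A,B)/4, 4d(A,B)] over WSPD pairs containing p, the nerve of
the balls B(p, r̃_p(α)) equals the nerve of the α-balls, i.e. the Čech complex
C_α. -/
theorem lazy_nerve_eq_cech {d : ℕ} {δ : ℝ} (hδ0 : 0 < δ) (hδ : δ ≤ 1 / 10)
    (P : Finset (EuclideanSpace ℝ (Fin d))) {ι : Type*} [Fintype ι]
    (A B : ι → Finset (EuclideanSpace ℝ (Fin d)))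
    (repA repB : ι → EuclideanSpace ℝ (Fin d))
    (hAP : ∀ w, A w ⊆ P) (hBP : ∀ w, B w ⊆ P)
    (hrA : ∀ w, repA w ∈ A w) (hrB : ∀ w, repB w ∈ B w)
    (hsepA : ∀ w, ∀ a ∈ A w, ∀ a' ∈ A w, ∀ a0 ∈ A w, ∀ b0 ∈ B w,
      dist a a' ≤ δ * dist a0 b0)
    (hsepB : ∀ w, ∀ b ∈ B w, ∀ b' ∈ B w, ∀ a0 ∈ A w, ∀ b0 ∈ B w,
      dist b b' ≤ δ * dist a0 b0)
    (hcover : ∀ p ∈ P, ∀ q ∈ P, p ≠ q →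
      ∃ w, (p ∈ A w ∧ q ∈ B w) ∨ (p ∈ B w ∧ q ∈ A w))
    {α : ℝ} (hα : 0 ≤ α)
    (rt : EuclideanSpace ℝ (Fin d) → ℝ)
    (hrt : ∀ p, rt p = sSup ({0} ∪ {r : ℝ | r ≤ α ∧ ∃ w,
      (p ∈ A w ∨ p ∈ B w) ∧
      dist (repA w) (repB w) / 4 ≤ r ∧ r ≤ 4 * dist (repA w) (repB w)})) :
    ∀ σ : Finset (EuclideanSpace ℝ (Fin d)), σ ⊆ P →
      ((∃ x, ∀ p ∈ σ, dist x p ≤ rt p) ↔ ∃ x, ∀ p ∈ σ, dist x p ≤ α) := by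
  set D : ι → ℝ := fun w => dist (repA w) (repB w) with hD
  have hbdd : ∀ p : EuclideanSpace ℝ (Fin d), BddAbove ({0} ∪ {r : ℝ | r ≤ α ∧ ∃ w,
      (p ∈ A w ∨ p ∈ B w) ∧ D w / 4 ≤ r ∧ r ≤ 4 * D w}) := by
    intro p
    refine ⟨α, ?_⟩
    rintro r (rfl | ⟨h1, _⟩)
    · exact hα
    · exact h1
  have hrt0 : ∀ p, 0 ≤ rt p := by
    intro p
    rw [hrt p]
    exact le_csSup (hbdd p) (Or.inl rfl)
  have hrtle : ∀ p, rt p ≤ α := by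
    intro p
    rw [hrt p]
    refine csSup_le ⟨0, Or.inl rfl⟩ ?_
    rintro r (rfl | ⟨h1, _⟩)
    · exact hα
    · exact h1
  have hAnear : ∀ w, ∀ a ∈ A w, dist a (repA w) ≤ δ * D w := fun w a ha =>
    hsepA w a ha (repA w) (hrA w) (repA w) (hrA w) (repB w) (hrB w)
  have hBnear : ∀ w, ∀ b ∈ B w, dist b (repB w) ≤ δ * D w := fun w b hb =>
    hsepB w b hb (repB w) (hrB w) (repA w) (hrA w) (repB w) (hrB w)
  have hDle : ∀ w, ∀ u ∈ A w, ∀ v ∈ B w, D w ≤ 2 * δ * D w + dist u v := by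
    intro w u hu v hv
    have h1 := hAnear w u hu
    have h2 := hBnear w v hv
    have h3 : D w ≤ dist (repA w) u + dist u v + dist v (repB w) :=
      dist_triangle4 (repA w) u v (repB w)
    rw [dist_comm (repA w) u] at h3
    linarith
  have hdistle : ∀ w, ∀ u ∈ A w, ∀ v ∈ B w, dist u v ≤ D w + 2 * δ * D w := by
    intro w u hu v hv
    have h1 := hAnear w u hu
    have h2 := hBnear w v hv
    have h3 : dist u v ≤ dist u (repA w) + dist (repA w) (repB w) + dist (repB w) v :=
      dist_triangle4 u (repA w) (repB w) v
    rw [dist_comm (repB w) v] at h3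
    linarith
  have hrtge : ∀ p w, (p ∈ A w ∨ p ∈ B w) → D w ≤ (5/2) * α → min α (4 * D w) ≤ rt p := by
    intro p w hw hDα
    have hD0 : (0:ℝ) ≤ D w := dist_nonneg
    rw [hrt p]
    refine le_csSup (hbdd p) (Or.inr ⟨min_le_left _ _, w, hw, ?_, min_le_right _ _⟩)
    refine le_min (by linarith) (by linarith)
  intro σ hσ
  constructor
  · rintro ⟨x, hx⟩
    exact ⟨x, fun p hp => (hx p hp).trans (hrtle p)⟩
  · rintro ⟨x, hx⟩
    by_cases hall : ∀ p ∈ σ, dist x p ≤ rt p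
    · exact ⟨x, hall⟩
    · push_neg at hall
      obtain ⟨p0, hp0σ, hlt⟩ := hall
      refine ⟨p0, fun p hp => ?_⟩
      by_cases hpe : p = p0
      · subst hpe; simpa using hrt0 p
      · obtain ⟨w, hw⟩ := hcover p0 (hσ hp0σ) p (hσ hp) (fun h => hpe h.symm)
        have hD0 : (0:ℝ) ≤ D w := dist_nonneg
        have hm0 : p0 ∈ A w ∨ p0 ∈ B w := by
          rcases hw with ⟨h1, _⟩ | ⟨h1, _⟩
          · exact Or.inl h1
          · exact Or.inr h1
        have hmp : p ∈ A w ∨ p ∈ B w := by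
          rcases hw with ⟨_, h2⟩ | ⟨_, h2⟩
          · exact Or.inr h2
          · exact Or.inl h2
        have h1 : D w ≤ 2 * δ * D w + dist p0 p := by
          rcases hw with ⟨ha, hb⟩ | ⟨hb, ha⟩
          · exact hDle w p0 ha p hb
          · have := hDle w p ha p0 hb
            rwa [dist_comm p p0] at this
        have h2 : dist p0 p ≤ D w + 2 * δ * D w := by
          rcases hw with ⟨ha, hb⟩ | ⟨hb, ha⟩
          · exact hdistle w p0 ha p hb
          · have := hdistle w p ha p0 hb
            rwa [dist_comm p p0] at this
        have hdpq : dist p0 p ≤ 2 * α := by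
          have hx0 := hx p0 hp0σ
          have hxp := hx p hp
          have := dist_triangle_left p0 p x
          linarith
        have hD52 : D w ≤ (5/2) * α := by nlinarith
        have h4D : 4 * D w < α := by
          by_contra h
          push_neg at h
          have hge := hrtge p0 w hm0 hD52
          rw [min_eq_left h] at hge
          exact absurd hlt (not_lt.mpr ((hx p0 hp0σ).trans hge))
        have hrtp := hrtge p w hmp hD52
        rw [min_eq_right h4D.le] at hrtp
        nlinarith
end

section
/- Fix c ≥ 1 and let W be a δ-WSPD of a finite set P with δ ≤ 1/10 and fixed representatives. Define r_p(α) via the union of intervals [d(A,B)/8, 8·d(A,B)] over pairs where p is a representative, and r̃_p(α) via the larger system additionally including intervals [d(A,B)/4, 4·d(A,B)] for all pairs containing p. Then for every α ≥ 0 and every p ∈ P with r̃_p(α) > r_p(α), there exists q ∈ P with ‖p − q‖ ≤ 8δ·r̃_p(α) and r_q((1+8δ)α) ≥ (1+8δ)·r̃_p(α). Consequently ∪_p \bar{B}(p, r̃_p(α)) ⊆ ∪_p \bar{B}(p, r_p((1+8δ)α)). -/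
open Set

private lemma lazy_bdd_aux (α : ℝ) (C : ℝ → Prop) :
    BddAbove ({0} ∪ {s : ℝ | s ≤ α ∧ C s}) := by
  refine ⟨max 0 α, ?_⟩
  rintro s (hs | ⟨h, -⟩)
  · simp only [mem_singleton_iff] at hs
    exact hs ▸ le_max_left _ _
  · exact le_trans h (le_max_right _ _)

private lemma lazy_closed_aux {ι : Type*} [Fintype ι] (α : ℝ)
    (c1 c2 : ι → Prop) (lo1 hi1 lo2 hi2 : ι → ℝ) :
    IsClosed ({0} ∪ {s : ℝ | s ≤ α ∧
      ((∃ w, c1 w ∧ lo1 w ≤ s ∧ s ≤ hi1 w) ∨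
       (∃ w, c2 w ∧ lo2 w ≤ s ∧ s ≤ hi2 w))}) := by
  have h : {s : ℝ | s ≤ α ∧
      ((∃ w, c1 w ∧ lo1 w ≤ s ∧ s ≤ hi1 w) ∨
       (∃ w, c2 w ∧ lo2 w ≤ s ∧ s ≤ hi2 w))}
      = (⋃ w ∈ {w | c1 w}, Icc (lo1 w) (hi1 w) ∩ Iic α) ∪
        (⋃ w ∈ {w | c2 w}, Icc (lo2 w) (hi2 w) ∩ Iic α) := by
    ext s
    simp only [mem_setOf_eq, mem_union, mem_iUnion, mem_inter_iff, mem_Icc, mem_Iic,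
      exists_prop]
    constructor
    · rintro ⟨hα, (⟨w, hc, h1, h2⟩ | ⟨w, hc, h1, h2⟩)⟩
      · exact Or.inl ⟨w, hc, ⟨h1, h2⟩, hα⟩
      · exact Or.inr ⟨w, hc, ⟨h1, h2⟩, hα⟩
    · rintro (⟨w, hc, ⟨h1, h2⟩, hα⟩ | ⟨w, hc, ⟨h1, h2⟩, hα⟩)
      · exact ⟨hα, Or.inl ⟨w, hc, h1, h2⟩⟩
      · exact ⟨hα, Or.inr ⟨w, hc, h1, h2⟩⟩
  rw [h]
  exact isClosed_singleton.union
    (((Set.toFinite _).isClosed_biUnion fun w _ => isClosed_Icc.inter isClosed_Iic).union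
     ((Set.toFinite _).isClosed_biUnion fun w _ => isClosed_Icc.inter isClosed_Iic))

/-- Sandwich lemma for lazy radii: with r_p(α) the lazy radius from the
representative intervals [d(A,B)/8, 8d(A,B)] (over pairs where p is a
representative) and r̃_p(α) from the enlarged system which additionally includes
[d(A,B)/4, 4d(A,B)] for every pair containing p, any p with r̃_p(α) > r_p(α)
admits q ∈ P with ‖p−q‖ ≤ 8δ·r̃_p(α) and r_q((1+8δ)α) ≥ (1+8δ)·r̃_p(α);
consequently ∪_p B(p, r̃_p(α)) ⊆ ∪_p B(p, r_p((1+8δ)α)). -/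
theorem lazy_sandwich {d : ℕ} {δ : ℝ} (hδ0 : 0 < δ) (hδ : δ ≤ 1 / 10)
    (P : Finset (EuclideanSpace ℝ (Fin d))) {ι : Type*} [Fintype ι]
    (A B : ι → Finset (EuclideanSpace ℝ (Fin d)))
    (repA repB : ι → EuclideanSpace ℝ (Fin d))
    (hAP : ∀ w, A w ⊆ P) (hBP : ∀ w, B w ⊆ P)
    (hrA : ∀ w, repA w ∈ A w) (hrB : ∀ w, repB w ∈ B w)
    (hsepA : ∀ w, ∀ a ∈ A w, ∀ a' ∈ A w, ∀ a0 ∈ A w, ∀ b0 ∈ B w,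
      dist a a' ≤ δ * dist a0 b0)
    (hsepB : ∀ w, ∀ b ∈ B w, ∀ b' ∈ B w, ∀ a0 ∈ A w, ∀ b0 ∈ B w,
      dist b b' ≤ δ * dist a0 b0)
    (hcover : ∀ p ∈ P, ∀ q ∈ P, p ≠ q →
      ∃ w, (p ∈ A w ∧ q ∈ B w) ∨ (p ∈ B w ∧ q ∈ A w))
    (r rt : ℝ → EuclideanSpace ℝ (Fin d) → ℝ)
    (hr : ∀ β p, r β p = sSup ({0} ∪ {s : ℝ | s ≤ β ∧ ∃ w,
      (p = repA w ∨ p = repB w) ∧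
      dist (repA w) (repB w) / 8 ≤ s ∧ s ≤ 8 * dist (repA w) (repB w)}))
    (hrt : ∀ β p, rt β p = sSup ({0} ∪ {s : ℝ | s ≤ β ∧
      ((∃ w, (p = repA w ∨ p = repB w) ∧
        dist (repA w) (repB w) / 8 ≤ s ∧ s ≤ 8 * dist (repA w) (repB w)) ∨
       (∃ w, (p ∈ A w ∨ p ∈ B w) ∧
        dist (repA w) (repB w) / 4 ≤ s ∧ s ≤ 4 * dist (repA w) (repB w)))}))
    {α : ℝ} (hα : 0 ≤ α) :
    (∀ p ∈ P, r α p < rt α p →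
      ∃ q ∈ P, dist p q ≤ 8 * δ * rt α p ∧
        (1 + 8 * δ) * rt α p ≤ r ((1 + 8 * δ) * α) q) ∧
    ∀ x : EuclideanSpace ℝ (Fin d), (∃ p ∈ P, dist x p ≤ rt α p) →
      ∃ p ∈ P, dist x p ≤ r ((1 + 8 * δ) * α) p := by
  have hr0 : ∀ β q, (0:ℝ) ≤ r β q := by
    intro β q
    rw [hr]
    exact le_csSup (lazy_bdd_aux β _) (Set.mem_union_left _ rfl)
  have hrt0 : ∀ β q, (0:ℝ) ≤ rt β q := by
    intro β q
    rw [hrt]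
    exact le_csSup (lazy_bdd_aux β _) (Set.mem_union_left _ rfl)
  have h1 : ∀ p ∈ P, r α p < rt α p →
      ∃ q ∈ P, dist p q ≤ 8 * δ * rt α p ∧
        (1 + 8 * δ) * rt α p ≤ r ((1 + 8 * δ) * α) q := by
    intro p hp hlt
    have hmem : rt α p ∈ ({0} : Set ℝ) ∪ {s : ℝ | s ≤ α ∧
        ((∃ w, (p = repA w ∨ p = repB w) ∧
          dist (repA w) (repB w) / 8 ≤ s ∧ s ≤ 8 * dist (repA w) (repB w)) ∨
         (∃ w, (p ∈ A w ∨ p ∈ B w) ∧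
          dist (repA w) (repB w) / 4 ≤ s ∧ s ≤ 4 * dist (repA w) (repB w)))} := by
      rw [hrt]
      exact (lazy_closed_aux α _ _ _ _ _ _).csSup_mem
        ⟨0, Set.mem_union_left _ rfl⟩ (lazy_bdd_aux α _)
    have hs0 : (0:ℝ) < rt α p := lt_of_le_of_lt (hr0 α p) hlt
    rcases hmem with h0 | ⟨hsα, hor⟩
    · simp only [mem_singleton_iff] at h0
      exact absurd h0 (ne_of_gt hs0)
    rcases hor with hrep | ⟨w, hpw, hlo, hhi⟩
    · exfalso
      have : rt α p ≤ r α p := by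
        rw [hr]
        exact le_csSup (lazy_bdd_aux α _) (Set.mem_union_right _ ⟨hsα, hrep⟩)
      linarith
    set s := rt α p with hsdef
    set D := dist (repA w) (repB w) with hD
    have hD0 : (0:ℝ) ≤ D := dist_nonneg
    have hsle : (1 + 8 * δ) * s ≤ (1 + 8 * δ) * α := by nlinarith
    have hmul1 : D / 8 ≤ (1 + 8 * δ) * s := by nlinarith
    have hmul2 : (1 + 8 * δ) * s ≤ 8 * D := by nlinarith
    rcases hpw with hpA | hpB
    · refine ⟨repA w, hAP w (hrA w), ?_, ?_⟩
      · have := hsepA w p hpA (repA w) (hrA w) (repA w) (hrA w) (repB w) (hrB w)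
        nlinarith
      · rw [hr]
        refine le_csSup (lazy_bdd_aux _ _) (Set.mem_union_right _ ?_)
        exact ⟨hsle, w, Or.inl rfl, hmul1, hmul2⟩
    · refine ⟨repB w, hBP w (hrB w), ?_, ?_⟩
      · have := hsepB w p hpB (repB w) (hrB w) (repA w) (hrA w) (repB w) (hrB w)
        nlinarith
      · rw [hr]
        refine le_csSup (lazy_bdd_aux _ _) (Set.mem_union_right _ ?_)
        exact ⟨hsle, w, Or.inr rfl, hmul1, hmul2⟩
  refine ⟨h1, ?_⟩
  rintro x ⟨p, hp, hxp⟩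
  have hmono : r α p ≤ r ((1 + 8 * δ) * α) p := by
    rw [hr, hr]
    refine csSup_le_csSup (lazy_bdd_aux _ _) ⟨0, Set.mem_union_left _ rfl⟩ ?_
    rintro s (hs | ⟨hsα, hw⟩)
    · exact Set.mem_union_left _ hs
    · exact Set.mem_union_right _ ⟨by nlinarith, hw⟩
  by_cases hc : r α p < rt α p
  · obtain ⟨q, hq, hdq, hrq⟩ := h1 p hp hc
    refine ⟨q, hq, ?_⟩
    have htri := dist_triangle x p q
    have := hrt0 α p
    linarith
  · push_neg at hc
    exact ⟨p, hp, hxp.trans (hc.trans hmono)⟩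
end
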